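/- Let r, k, Δ' be integers with r ≥ 2, k ≥ 1 and Δ' ≥ 0, and set Δ = r² + r·(k−1)·Δ'. Let B be a finite set with |B| > Δ and let A ⊆ B satisfy |B ∖ A| ≤ (k−1)·Δ'. Then the number of r-element subsets of B is at most 4 times the number of r-element subsets of A, i.e., C(|B|, r) ≤ 4·C(|A|, r). -/

import Mathlib

/-- Bernoulli-type inequality in `ℕ`. -/
lemma nat_bernoulli (c m : ℕ) : c ^ (m + 1) + (m + 1) * c ^ m ≤ (c + 1) ^ (m + 1) := by
  induction m with
  | zero => simp
  | succ m ih =>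
    have h : (c + 1) ^ (m + 1 + 1) = (c + 1) * (c + 1) ^ (m + 1) := by ring
    have h2 : (c + 1) * (c ^ (m + 1) + (m + 1) * c ^ m) ≤ (c + 1) * (c + 1) ^ (m + 1) :=
      Nat.mul_le_mul_left _ ih
    have he : (c + 1) * (c ^ (m + 1) + (m + 1) * c ^ m)
        = c ^ (m + 1 + 1) + (m + 1 + 1) * c ^ (m + 1) + (m + 1) * c ^ m := by ring
    omega

/-- `(s+1)^(s+1) ≤ 4 s^(s+1)` for `s ≥ 1`. -/
lemma succ_pow_le_four_mul (s : ℕ) (hs : 1 ≤ s) : (s + 1) ^ (s + 1) ≤ 4 * s ^ (s + 1) := by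
  induction s with
  | zero => omega
  | succ s ih =>
    rcases Nat.eq_or_lt_of_le hs with h | h
    · have hs0 : s = 0 := by omega
      subst hs0; norm_num
    have hs1 : 1 ≤ s := by omega
    show (s + 2) ^ (s + 2) ≤ 4 * (s + 1) ^ (s + 2)
    have ih' := ih hs1
    -- key: (s+1)^(2s+3) ≥ s^(s+1) (s+2)^(s+2)
    have key : s ^ (s + 1) * (s + 2) ^ (s + 2) ≤ (s + 1) ^ (2 * s + 3) := by
      have hb := nat_bernoulli (s * (s + 2)) (s + 1)
      have hsq : s * (s + 2) + 1 = (s + 1) ^ 2 := by ring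
      rw [hsq, ← pow_mul] at hb
      have hrhs : (s * (s + 2)) ^ (s + 2) + (s + 2) * (s * (s + 2)) ^ (s + 1)
          = (s + 1) * (s ^ (s + 1) * (s + 2) ^ (s + 2)) := by
        rw [mul_pow, mul_pow, pow_succ (s) (s + 1), pow_succ (s + 2) (s + 1)]
        ring
      have hb' : (s + 1) * (s ^ (s + 1) * (s + 2) ^ (s + 2)) ≤ (s + 1) ^ (2 * (s + 2)) := by
        rw [← hrhs]; exact hb
      have : (s + 1) ^ (2 * (s + 2)) = (s + 1) * (s + 1) ^ (2 * s + 3) := by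
        rw [← pow_succ']; ring_nf
      rw [this] at hb'
      exact Nat.le_of_mul_le_mul_left hb' (by omega)
    -- combine
    have h1 : (s + 2) ^ (s + 2) * s ^ (s + 1) ≤ (s + 1) ^ (s + 2) * (s + 1) ^ (s + 1) := by
      rw [← pow_add]
      have : s + 2 + (s + 1) = 2 * s + 3 := by ring
      rw [this]
      linarith [key]
    have h2 : (s + 1) ^ (s + 2) * (s + 1) ^ (s + 1) ≤ (s + 1) ^ (s + 2) * (4 * s ^ (s + 1)) :=
      Nat.mul_le_mul_left _ ih'
    have h3 : (s + 2) ^ (s + 2) * s ^ (s + 1) ≤ 4 * (s + 1) ^ (s + 2) * s ^ (s + 1) := by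
      calc (s + 2) ^ (s + 2) * s ^ (s + 1) ≤ (s + 1) ^ (s + 2) * (4 * s ^ (s + 1)) :=
            le_trans h1 h2
        _ = 4 * (s + 1) ^ (s + 2) * s ^ (s + 1) := by ring
    have hpos : 0 < s ^ (s + 1) := Nat.pow_pos (by omega)
    exact Nat.le_of_mul_le_mul_right h3 hpos

/-- Counting core of the contraction lemma: let `r ≥ 2`, `k ≥ 1`, `Δ' ≥ 0` and
`Δ = r² + r·(k−1)·Δ'`.  If `B` is a finite set with `|B| > Δ` and `A ⊆ B`
satisfies `|B ∖ A| ≤ (k−1)·Δ'`, then `C(|B|, r) ≤ 4·C(|A|, r)`. -/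
theorem choose_le_four_mul_choose
    {γ : Type*} [DecidableEq γ] (r k Δ' : ℕ) (hr : 2 ≤ r) (hk : 1 ≤ k)
    (B A : Finset γ) (hAB : A ⊆ B)
    (hB : r ^ 2 + r * (k - 1) * Δ' < B.card)
    (hBA : (B \ A).card ≤ (k - 1) * Δ') :
    Nat.choose B.card r ≤ 4 * Nat.choose A.card r := by
  set n := B.card with hn
  set a := A.card with ha
  have hd : (B \ A).card = n - a := Finset.card_sdiff_of_subset hAB
  have han : a ≤ n := Finset.card_le_card hAB
  set d := n - a with hdd
  have hda : a + d = n := by omega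
  have hdt : d ≤ (k - 1) * Δ' := by omega
  have hnbig : r ^ 2 + r * d + 1 ≤ n := by
    have : r * d ≤ r * ((k - 1) * Δ') := Nat.mul_le_mul_left _ hdt
    have h2 : r * (k - 1) * Δ' = r * ((k - 1) * Δ') := by ring
    omega
  -- descending factorial inequality with multiplier (r-1)^r vs r^r
  have hrd : d ≤ r * d := Nat.le_mul_of_pos_left d (by omega)
  have hrr2 : r ≤ r ^ 2 := by nlinarith
  have hdesc : (r - 1) ^ r * n.descFactorial r ≤ r ^ r * a.descFactorial r := by
    rw [Nat.descFactorial_eq_prod_range, Nat.descFactorial_eq_prod_range]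
    calc (r - 1) ^ r * ∏ i ∈ Finset.range r, (n - i)
        = ∏ i ∈ Finset.range r, ((r - 1) * (n - i)) := by
          rw [Finset.prod_mul_distrib, Finset.prod_const, Finset.card_range]
      _ ≤ ∏ i ∈ Finset.range r, (r * (a - i)) := by
          apply Finset.prod_le_prod'
          intro i hi
          have hir : i < r := Finset.mem_range.mp hi
          have hia : i ≤ a := by linarith
          have hin : i ≤ n := le_trans hia han
          have hr1 : 1 ≤ r := by omega
          zify [hia, hin, hr1]
          have hai : (a : ℤ) + d = (n : ℤ) := by exact_mod_cast hda
          have hnbig' : (r : ℤ) ^ 2 + r * d + 1 ≤ (n : ℤ) := by exact_mod_cast hnbig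
          have hir' : (i : ℤ) + 1 ≤ (r : ℤ) := by exact_mod_cast hir
          have hrr2' : (r : ℤ) ≤ (r : ℤ) ^ 2 := by exact_mod_cast hrr2
          nlinarith [hai, hnbig', hir', hrr2']
      _ = r ^ r * ∏ i ∈ Finset.range r, (a - i) := by
          rw [Finset.prod_mul_distrib, Finset.prod_const, Finset.card_range]
  have hrr : r ^ r ≤ 4 * (r - 1) ^ r := by
    have := succ_pow_le_four_mul (r - 1) (by omega)
    have h1 : r - 1 + 1 = r := by omega
    rw [h1] at this
    exact this
  have hdesc2 : n.descFactorial r ≤ 4 * a.descFactorial r := by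
    have h1 : (r - 1) ^ r * n.descFactorial r ≤ 4 * (r - 1) ^ r * a.descFactorial r :=
      le_trans hdesc (by calc r ^ r * a.descFactorial r
            ≤ (4 * (r - 1) ^ r) * a.descFactorial r := Nat.mul_le_mul_right _ hrr
          _ = 4 * (r - 1) ^ r * a.descFactorial r := by ring)
    have hpos : 0 < (r - 1) ^ r := Nat.pow_pos (by omega)
    calc n.descFactorial r = (r - 1) ^ r * n.descFactorial r / (r - 1) ^ r := by
          rw [Nat.mul_div_cancel_left _ hpos]
      _ ≤ 4 * (r - 1) ^ r * a.descFactorial r / (r - 1) ^ r := Nat.div_le_div_right h1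
      _ = 4 * a.descFactorial r := by
          rw [show 4 * (r - 1) ^ r * a.descFactorial r
              = (r - 1) ^ r * (4 * a.descFactorial r) by ring,
            Nat.mul_div_cancel_left _ hpos]
  -- transfer to choose
  have hfac : 0 < r.factorial := Nat.factorial_pos r
  have h1 : r.factorial * n.choose r ≤ r.factorial * (4 * a.choose r) := by
    rw [← Nat.descFactorial_eq_factorial_mul_choose]
    calc n.descFactorial r ≤ 4 * a.descFactorial r := hdesc2
      _ = r.factorial * (4 * a.choose r) := by
          rw [Nat.descFactorial_eq_factorial_mul_choose]; ring
  exact Nat.le_of_mul_le_mul_left h1 hfac
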